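/- Let k ≥ 2 be an integer and m a positive integer. Then g_k(m) · ∏_{p∣m} p^{k−1} = m^{k−1} · ∏_{p∣m} (p^{k−1} + 1), where both products run over the distinct primes p dividing m; equivalently, g_k(m) = m^{k−1} ∏_{p∣m} (1 + p^{1−k}) as an identity of rational numbers. -/

import Mathlib

noncomputable section

/-- `g_k(m) = Σ_{d>0, d²∣m} μ(d) σ_{k−1}(m/d²)`. -/
def gkFun (k m : ℕ) : ℤ :=
  ∑ d ∈ (Finset.range (m + 1)).filter (fun d => 0 < d ∧ d ^ 2 ∣ m),
    ArithmeticFunction.moebius d * (ArithmeticFunction.sigma (k - 1) (m / d ^ 2) : ℤ)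

open ArithmeticFunction Finset

/-- Auxiliary arithmetic function: `μ(√n)` if `n` is a square, `0` otherwise. -/
def sqMoebius : ArithmeticFunction ℤ :=
  ⟨fun n => if IsSquare n then ArithmeticFunction.moebius n.sqrt else 0, by simp⟩

lemma sqMoebius_apply (n : ℕ) :
    sqMoebius n = if IsSquare n then ArithmeticFunction.moebius n.sqrt else 0 := rfl

lemma sqMoebius_sq (d : ℕ) : sqMoebius (d ^ 2) = ArithmeticFunction.moebius d := by
  rw [sqMoebius_apply, if_pos ⟨d, (pow_two d)⟩, Nat.sqrt_eq']

lemma sqMoebius_not_square {n : ℕ} (h : ¬ IsSquare n) : sqMoebius n = 0 := by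
  rw [sqMoebius_apply, if_neg h]

lemma isMultiplicative_sqMoebius : sqMoebius.IsMultiplicative := by
  constructor
  · have : (1 : ℕ) = 1 ^ 2 := by norm_num
    rw [this, sqMoebius_sq]; simp
  · intro m n h
    by_cases hmn : IsSquare (m * n)
    · obtain ⟨c, hc⟩ := hmn
      have hc2 : m * n = c ^ 2 := by rw [hc, pow_two]
      have hu : IsUnit (gcd m n) := by rw [Nat.isUnit_iff]; exact h
      obtain ⟨a, ha⟩ := exists_eq_pow_of_mul_eq_pow hu hc2
      have hu' : IsUnit (gcd n m) := by rw [Nat.isUnit_iff]; exact h.symm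
      obtain ⟨b, hb⟩ := exists_eq_pow_of_mul_eq_pow hu' (by rw [mul_comm]; exact hc2)
      subst ha hb
      have hab : Nat.Coprime a b :=
        (h.coprime_dvd_left (dvd_pow_self a two_ne_zero)).coprime_dvd_right
          (dvd_pow_self b two_ne_zero)
      rw [← mul_pow, sqMoebius_sq, sqMoebius_sq, sqMoebius_sq,
        isMultiplicative_moebius.map_mul_of_coprime hab]
    · rw [sqMoebius_not_square hmn]
      by_cases hm : IsSquare m
      · have hn : ¬ IsSquare n := fun hn => hmn (hm.mul hn)
        rw [sqMoebius_not_square hn, mul_zero]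
      · rw [sqMoebius_not_square hm, zero_mul]

/-- `gkFun` as a Dirichlet convolution. -/
lemma gkFun_eq_conv (k m : ℕ) (hm : 0 < m) :
    gkFun k m
      = (sqMoebius * ((ArithmeticFunction.sigma (k - 1) : ArithmeticFunction ℕ) :
          ArithmeticFunction ℤ)) m := by
  classical
  rw [ArithmeticFunction.mul_apply,
    Nat.sum_divisorsAntidiagonal
      (fun a b => sqMoebius a *
        (((ArithmeticFunction.sigma (k - 1) : ArithmeticFunction ℕ) :
          ArithmeticFunction ℤ) b))]
  rw [← Finset.sum_filter_of_ne
      (p := fun e => IsSquare e)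
      (fun e _ hne => by
        by_contra h
        exact hne (by rw [sqMoebius_not_square h, zero_mul]))]
  unfold gkFun
  refine Finset.sum_nbij' (fun d => d ^ 2) (fun e => e.sqrt) ?_ ?_ ?_ ?_ ?_
  · intro d hd
    simp only [mem_filter, mem_range] at hd
    exact Finset.mem_filter.mpr
      ⟨Nat.mem_divisors.mpr ⟨hd.2.2, hm.ne'⟩, ⟨d, pow_two d⟩⟩
  · intro e he
    obtain ⟨hdvd, hsq⟩ := Finset.mem_filter.mp he
    obtain ⟨hdvd, hm0⟩ := Nat.mem_divisors.mp hdvd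
    obtain ⟨r, hr⟩ := hsq
    have hr2 : e = r ^ 2 := by rw [hr, pow_two]
    have he0 : e ≠ 0 := by
      rintro rfl
      exact hm.ne' (Nat.eq_zero_of_zero_dvd hdvd)
    have hr0 : 0 < r := by
      rcases Nat.eq_zero_or_pos r with h | h
      · exact absurd (by simp [hr2, h]) he0
      · exact h
    subst hr2
    simp only [mem_filter, mem_range, Nat.sqrt_eq']
    refine ⟨?_, hr0, hdvd⟩
    have h1 : r ≤ r ^ 2 := Nat.le_self_pow two_ne_zero r
    have h2 : r ^ 2 ≤ m := Nat.le_of_dvd hm hdvd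
    omega
  · intro d _
    exact Nat.sqrt_eq' d
  · intro e he
    obtain ⟨_, hsq⟩ := Finset.mem_filter.mp he
    obtain ⟨r, hr⟩ := hsq
    have hr2 : e = r ^ 2 := by rw [hr, pow_two]
    subst hr2
    show ((r ^ 2).sqrt) ^ 2 = r ^ 2
    rw [Nat.sqrt_eq']
  · intro d hd
    rw [sqMoebius_sq]
    rfl

lemma not_isSquare_pow_of_odd {p i : ℕ} (hp : p.Prime) (hi : ¬ Even i) :
    ¬ IsSquare (p ^ i) := by
  rintro ⟨r, hr⟩
  have hi0 : i ≠ 0 := by rintro rfl; exact hi Even.zero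
  have hr0 : r ≠ 0 := by
    rintro rfl
    rw [mul_zero] at hr
    exact hp.ne_zero ((pow_eq_zero_iff hi0).mp hr)
  apply hi
  have := congrArg (fun n => n.factorization p) hr
  simp only [hp.factorization_pow, Finsupp.single_eq_same,
    Nat.factorization_mul hr0 hr0, Finsupp.coe_add, Pi.add_apply] at this
  exact ⟨r.factorization p, this⟩

/-- Value at a prime power. -/
lemma conv_prime_pow {k p : ℕ} (a : ℕ) (hk : 2 ≤ k) (hp : p.Prime) (ha : 0 < a) :
    (sqMoebius * ((ArithmeticFunction.sigma (k - 1) : ArithmeticFunction ℕ) :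
        ArithmeticFunction ℤ)) (p ^ a)
      = (p : ℤ) ^ ((a - 1) * (k - 1)) * ((p : ℤ) ^ (k - 1) + 1) := by
  have hsig : ∀ j : ℕ, ((ArithmeticFunction.sigma (k - 1) (p ^ j) : ℕ) : ℤ)
      = ∑ i ∈ Finset.range (j + 1), ((p : ℤ) ^ (k - 1)) ^ i := by
    intro j
    rw [sigma_apply_prime_pow hp]
    push_cast
    refine Finset.sum_congr rfl fun i _ => ?_
    rw [← pow_mul, mul_comm]
  rw [ArithmeticFunction.mul_apply,
    Nat.sum_divisorsAntidiagonal
      (fun x y => sqMoebius x *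
        (((ArithmeticFunction.sigma (k - 1) : ArithmeticFunction ℕ) :
          ArithmeticFunction ℤ) y)),
    Nat.sum_divisors_prime_pow hp]
  have hterm : ∀ i, sqMoebius (p ^ i) = if i = 0 then 1 else if i = 2 then -1 else 0 := by
    intro i
    rcases Nat.even_or_odd i with ⟨j, hj⟩ | hodd
    · subst hj
      have h2 : p ^ (j + j) = (p ^ j) ^ 2 := by ring
      rw [h2, sqMoebius_sq]
      rcases Nat.eq_zero_or_pos j with rfl | hj0
      · simp
      · rcases eq_or_lt_of_le (show 1 ≤ j from hj0) with h1 | h2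
        · rw [← h1, pow_one, moebius_apply_prime hp]
          norm_num
        · rw [moebius_apply_prime_pow hp hj0.ne', if_neg (by omega),
            if_neg (by omega), if_neg (by omega)]
    · obtain ⟨t, rfl⟩ := hodd
      rw [sqMoebius_not_square (not_isSquare_pow_of_odd hp
          (Nat.not_even_iff.mpr (by omega))),
        if_neg (by omega), if_neg (by omega)]
  rcases eq_or_lt_of_le (show 1 ≤ a from ha) with h1 | h2
  · -- a = 1
    rw [← h1]
    rw [Finset.sum_range_succ, Finset.sum_range_one]
    simp only [hterm]
    norm_num
    have hs1 := hsig 1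
    rw [pow_one] at hs1
    rw [hs1, Finset.sum_range_succ, Finset.sum_range_one]
    ring
  · -- a ≥ 2
    obtain ⟨b, rfl⟩ : ∃ b, a = b + 2 := ⟨a - 2, by omega⟩
    have hsubset : ({0, 2} : Finset ℕ) ⊆ Finset.range (b + 2 + 1) := by
      intro x hx
      simp only [Finset.mem_insert, Finset.mem_singleton] at hx
      rcases hx with rfl | rfl <;> simp
    rw [← Finset.sum_subset hsubset (fun x _ hx => by
      simp only [Finset.mem_insert, Finset.mem_singleton, not_or] at hx
      rw [hterm]
      simp [hx.1, hx.2])]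
    rw [Finset.sum_pair (by norm_num : (0 : ℕ) ≠ 2)]
    simp only [hterm]
    norm_num
    have hdiv : p ^ (b + 2) / p ^ 2 = p ^ b := by
      rw [Nat.pow_div (by omega) hp.pos]
      norm_num
    rw [hdiv, hsig, hsig]
    have hsplit : ∑ i ∈ Finset.range (b + 2 + 1), ((p : ℤ) ^ (k - 1)) ^ i
        = (∑ i ∈ Finset.range (b + 1), ((p : ℤ) ^ (k - 1)) ^ i)
          + ((p : ℤ) ^ (k - 1)) ^ (b + 1) + ((p : ℤ) ^ (k - 1)) ^ (b + 2) := by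
      rw [Finset.sum_range_succ, Finset.sum_range_succ]
    rw [hsplit]
    rw [mul_comm (b + 1) (k - 1), pow_mul]
    ring

/-- for `k ≥ 2` and `m > 0`,
`g_k(m) · ∏_{p∣m} p^{k−1} = m^{k−1} · ∏_{p∣m} (p^{k−1} + 1)`, the products running over
the distinct primes `p` dividing `m`. -/
theorem statement10 (k m : ℕ) (hk : 2 ≤ k) (hm : 0 < m) :
    gkFun k m * ∏ p ∈ m.primeFactors, (p : ℤ) ^ (k - 1)
      = (m : ℤ) ^ (k - 1) * ∏ p ∈ m.primeFactors, ((p : ℤ) ^ (k - 1) + 1) := by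
  induction m using Nat.recOnPosPrimePosCoprime with
  | prime_pow p n hp hn =>
    have hpn : p.Prime := hp
    rw [gkFun_eq_conv k _ hm, conv_prime_pow n hk hpn hn,
      Nat.primeFactors_prime_pow hn.ne' hp]
    simp only [Finset.prod_singleton]
    obtain ⟨c, rfl⟩ : ∃ c, n = c + 1 := ⟨n - 1, by omega⟩
    push_cast
    rw [mul_right_comm, ← pow_add, ← pow_mul]
    congr 2
    ring
  | zero => omega
  | one =>
    have : gkFun k 1 = 1 := by
      rw [gkFun_eq_conv k 1 one_pos,
        (isMultiplicative_sqMoebius.mul isMultiplicative_sigma.natCast).map_one]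
    simp [this]
  | coprime a b ha hb hab iha ihb =>
    have ha0 : 0 < a := by omega
    have hb0 : 0 < b := by omega
    have hga : gkFun k (a * b) = gkFun k a * gkFun k b := by
      rw [gkFun_eq_conv k _ hm, gkFun_eq_conv k a ha0, gkFun_eq_conv k b hb0,
        (isMultiplicative_sqMoebius.mul
          isMultiplicative_sigma.natCast).map_mul_of_coprime hab]
    have hpf : (a * b).primeFactors = a.primeFactors ∪ b.primeFactors :=
      Nat.Coprime.primeFactors_mul hab
    have hdisj : Disjoint a.primeFactors b.primeFactors :=
      Nat.Coprime.disjoint_primeFactors hab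
    rw [hga, hpf, Finset.prod_union hdisj, Finset.prod_union hdisj]
    have := iha ha0
    have := ihb hb0
    push_cast
    rw [mul_pow]
    calc gkFun k a * gkFun k b *
          ((∏ p ∈ a.primeFactors, (p : ℤ) ^ (k - 1)) *
            ∏ p ∈ b.primeFactors, (p : ℤ) ^ (k - 1))
        = (gkFun k a * ∏ p ∈ a.primeFactors, (p : ℤ) ^ (k - 1)) *
          (gkFun k b * ∏ p ∈ b.primeFactors, (p : ℤ) ^ (k - 1)) := by ring
      _ = ((a : ℤ) ^ (k - 1) * ∏ p ∈ a.primeFactors, ((p : ℤ) ^ (k - 1) + 1)) *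
          ((b : ℤ) ^ (k - 1) * ∏ p ∈ b.primeFactors, ((p : ℤ) ^ (k - 1) + 1)) := by
            rw [iha ha0, ihb hb0]
      _ = (a : ℤ) ^ (k - 1) * (b : ℤ) ^ (k - 1) *
          ((∏ p ∈ a.primeFactors, ((p : ℤ) ^ (k - 1) + 1)) *
            ∏ p ∈ b.primeFactors, ((p : ℤ) ^ (k - 1) + 1)) := by ring
end
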